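/- Let n be odd with n ≥ 7, let α = (3, 4, ..., n) and β = (4, 6) be permutations of {1, ..., n}, and set τ = βαβ⁻¹αβ⁻¹α⁻¹βα⁻¹. Then the three permutations (βα⁻¹)², τ, and (αβ⁻¹)⁻¹τ(αβ⁻¹) generate the alternating group on {3, ..., n}. -/

import Mathlib

open Equiv Equiv.Perm

variable {G : Type*} [DecidableEq G]

/-- the 3-cycle a ↦ b ↦ c ↦ a -/
def f3 (a b c : G) : Equiv.Perm G := Equiv.swap a c * Equiv.swap a b

lemma f3_a {a b c : G} (hab : a ≠ b) (hbc : b ≠ c) : f3 a b c a = b := by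
  simp [f3, Equiv.swap_apply_of_ne_of_ne hab.symm hbc]

lemma f3_b (a b c : G) : f3 a b c b = c := by
  simp [f3]

lemma f3_c {a b c : G} (hac : a ≠ c) (hbc : b ≠ c) : f3 a b c c = a := by
  simp [f3, Equiv.swap_apply_of_ne_of_ne hac.symm hbc.symm]

lemma f3_other {a b c x : G} (hxa : x ≠ a) (hxb : x ≠ b) (hxc : x ≠ c) : f3 a b c x = x := by
  simp [f3, Equiv.swap_apply_of_ne_of_ne, hxa, hxb, hxc]

lemma f3_inv (a b c : G) : (f3 a b c)⁻¹ = f3 a c b := by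
  simp [f3, mul_inv_rev]




lemma f3_rotate {a b c : G} (hab : a ≠ b) (hbc : b ≠ c) (hca : c ≠ a) :
    f3 a b c = f3 b c a := by
  ext x
  rcases eq_or_ne x a with h | hxa
  · rw [h, f3_a hab hbc, f3_c hab.symm hca]
  rcases eq_or_ne x b with h | hxb
  · rw [h, f3_b, f3_a hbc hca]
  rcases eq_or_ne x c with h | hxc
  · rw [h, f3_c hca.symm hbc, f3_b]
  · rw [f3_other hxa hxb hxc, f3_other hxb hxc hxa]

lemma f3_conj (g : Equiv.Perm G) (a b c : G) :
    g * f3 a b c * g⁻¹ = f3 (g a) (g b) (g c) := by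
  rw [f3, f3, Equiv.swap_apply_apply, Equiv.swap_apply_apply]
  simp [mul_assoc]

lemma f3_mul {p a b c : G} (hpa : p ≠ a) (hpb : p ≠ b) (hpc : p ≠ c)
    (hab : a ≠ b) (hac : a ≠ c) (hbc : b ≠ c) :
    f3 p a c = f3 p b c * f3 p a b := by
  ext x
  rcases eq_or_ne x p with h | hxp
  · rw [h, f3_a hpa hac, Perm.mul_apply, f3_a hpa hab, f3_other hpa.symm hab hac]
  rcases eq_or_ne x a with h | hxa
  · rw [h, f3_b, Perm.mul_apply, f3_b, f3_b]
  rcases eq_or_ne x b with h | hxb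
  · rw [h, f3_other hpb.symm hab.symm hbc, Perm.mul_apply, f3_c hpb hab, f3_a hpb hbc]
  rcases eq_or_ne x c with h | hxc
  · rw [h, f3_c hpc hac, Perm.mul_apply, f3_other hpc.symm hac.symm hbc.symm, f3_c hpc hbc]
  · rw [f3_other hxp hxa hxc, Perm.mul_apply, f3_other hxp hxa hxb, f3_other hxp hxb hxc]

lemma f3_mul₂ {p a b c : G} (hpa : p ≠ a) (hpb : p ≠ b) (hpc : p ≠ c)
    (hab : a ≠ b) (hac : a ≠ c) (hbc : b ≠ c) :
    f3 a c b = f3 p b a * f3 p a c := by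
  ext x
  rcases eq_or_ne x p with h | hxp
  · rw [h, f3_other hpa hpc hpb, Perm.mul_apply, f3_a hpa hac, f3_c hpa hab.symm]
  rcases eq_or_ne x a with h | hxa
  · rw [h, f3_a hac hbc.symm, Perm.mul_apply, f3_b, f3_other hpc.symm hbc.symm hac.symm]
  rcases eq_or_ne x b with h | hxb
  · rw [h, f3_c hab hbc.symm, Perm.mul_apply, f3_other hpb.symm hab.symm hbc, f3_b]
  rcases eq_or_ne x c with h | hxc
  · rw [h, f3_b, Perm.mul_apply, f3_c hpc hac, f3_a hpb hab.symm]
  · rw [f3_other hxa hxc hxb, Perm.mul_apply, f3_other hxp hxa hxc, f3_other hxp hxb hxa]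

lemma isThreeCycle_destruct [Fintype G] {σ : Equiv.Perm G} (h : σ.IsThreeCycle) :
    ∃ a b c : G, a ≠ b ∧ b ≠ c ∧ c ≠ a ∧ a ∈ σ.support ∧ b ∈ σ.support ∧ c ∈ σ.support ∧
      σ = f3 a b c := by
  obtain ⟨a, ha, -⟩ := h.isCycle
  have h3 : σ ^ 3 = 1 := by
    rw [← h.orderOf]; exact pow_orderOf_eq_one σ
  set b := σ a with hb
  set c := σ b with hc
  have hca : σ c = a := by
    have : (σ ^ 3) a = a := by rw [h3]; rfl
    rw [pow_succ, pow_succ, pow_one, Perm.mul_apply, Perm.mul_apply] at this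
    rw [hc, hb]; exact this
  have hab : a ≠ b := Ne.symm ha
  have hbc : b ≠ c := fun e => ha (σ.injective (by rw [← hc, ← e, ← hb]))
  have hcadist : c ≠ a := by
    intro e
    apply hbc
    apply σ.injective
    rw [← hc, hca, e]
  have hsa : a ∈ σ.support := Perm.mem_support.2 ha
  have hsb : b ∈ σ.support := Perm.mem_support.2 (fun e => hbc (hc.trans e).symm)
  have hsc : c ∈ σ.support := Perm.mem_support.2 (by rw [hca]; exact fun e => hcadist e.symm)
  have hsupp : ({a, b, c} : Finset G) = σ.support := by
    apply Finset.eq_of_subset_of_card_le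
    · intro x hx
      simp only [Finset.mem_insert, Finset.mem_singleton] at hx
      rcases hx with rfl | rfl | rfl <;> assumption
    · rw [h.card_support]
      rw [Finset.card_insert_of_notMem (by simp [hab, hcadist.symm]),
        Finset.card_insert_of_notMem (by simp [hbc])]
      simp
  refine ⟨a, b, c, hab, hbc, hcadist, hsa, hsb, hsc, ?_⟩
  ext x
  rcases eq_or_ne x a with e | hxa
  · rw [e, ← hb, f3_a hab hbc]
  rcases eq_or_ne x b with e | hxb
  · rw [e, ← hc, f3_b]
  rcases eq_or_ne x c with e | hxc
  · rw [e, hca, f3_c hcadist.symm hbc]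
  · rw [f3_other hxa hxb hxc]
    apply Perm.notMem_support.1
    rw [← hsupp]
    simp [hxa, hxb, hxc]

open Fin.NatCast

set_option maxHeartbeats 1000000 in
/-- `n` odd, `n ≥ 7`, `α = (3, 4, ..., n)`, `β = (4, 6)` on `{1, ..., n}`
(realized in `Equiv.Perm (Fin (n+1))`, the point `0` unused), and
`τ = βαβ⁻¹αβ⁻¹α⁻¹βα⁻¹` (composing left-to-right, so a word `x₁⋯x_k` is the Lean
product `x_k * ⋯ * x₁`). Then `(βα⁻¹)²`, `τ`, `(αβ⁻¹)⁻¹τ(αβ⁻¹)` generate the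
alternating group on `{3, ..., n}`. -/
theorem stmt3 (n : ℕ) (hn : 7 ≤ n) (hodd : Odd n)
    (α β : Equiv.Perm (Fin (n + 1)))
    (hα₁ : ∀ i : ℕ, 3 ≤ i → i < n → α (i : Fin (n + 1)) = ((i + 1 : ℕ) : Fin (n + 1)))
    (hα₂ : α (n : Fin (n + 1)) = 3)
    (hα₃ : ∀ x : Fin (n + 1), x.val < 3 → α x = x)
    (hβ₁ : β 4 = 6) (hβ₂ : β 6 = 4)
    (hβ₃ : ∀ x : Fin (n + 1), x ∉ ({4, 6} : Set (Fin (n + 1))) → β x = x)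
    (σ : Equiv.Perm (Fin (n + 1))) :
    σ ∈ Subgroup.closure
      ({(α⁻¹ * β) ^ 2,
        α⁻¹ * β * α⁻¹ * β⁻¹ * α * β⁻¹ * α * β,
        (β⁻¹ * α) * (α⁻¹ * β * α⁻¹ * β⁻¹ * α * β⁻¹ * α * β) * (β⁻¹ * α)⁻¹} :
        Set (Equiv.Perm (Fin (n + 1)))) ↔
    (Equiv.Perm.sign σ = 1 ∧ ∀ x : Fin (n + 1), x.val < 3 → σ x = x) := by
  -- ℕ-cast helpers
  have hval : ∀ i : ℕ, i ≤ n → ((i : Fin (n + 1)) : ℕ) = i := fun i hi =>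
    Fin.val_cast_of_lt (by omega)
  have hne : ∀ i j : ℕ, i ≤ n → j ≤ n → i ≠ j → (i : Fin (n + 1)) ≠ (j : Fin (n + 1)) := by
    intro i j hi hj hij e
    apply hij
    have := congrArg Fin.val e
    rwa [hval i hi, hval j hj] at this
  -- hypotheses in cast form
  have hb4 : β ((4 : ℕ) : Fin (n + 1)) = ((6 : ℕ) : Fin (n + 1)) := by push_cast; exact hβ₁
  have hb6 : β ((6 : ℕ) : Fin (n + 1)) = ((4 : ℕ) : Fin (n + 1)) := by push_cast; exact hβ₂
  have han : α ((n : ℕ) : Fin (n + 1)) = ((3 : ℕ) : Fin (n + 1)) := by push_cast; exact hα₂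
  have hbfix : ∀ i : ℕ, i ≤ n → i ≠ 4 → i ≠ 6 → β ((i : ℕ) : Fin (n + 1)) = i := by
    intro i hi h4 h6
    apply hβ₃
    simp only [Set.mem_insert_iff, Set.mem_singleton_iff, not_or]
    constructor
    · exact fun e => hne i 4 hi (by omega) h4 (by push_cast at e ⊢; exact e)
    · exact fun e => hne i 6 hi (by omega) h6 (by push_cast at e ⊢; exact e)
  have hainv : ∀ i : ℕ, 4 ≤ i → i ≤ n → α⁻¹ ((i : ℕ) : Fin (n + 1)) = ((i - 1 : ℕ) : Fin (n + 1)) := by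
    intro i h4 hi
    rw [Equiv.Perm.inv_eq_iff_eq, hα₁ (i - 1) (by omega) (by omega)]
    congr 1
    omega
  have hainv3 : α⁻¹ ((3 : ℕ) : Fin (n + 1)) = ((n : ℕ) : Fin (n + 1)) := by
    rw [Equiv.Perm.inv_eq_iff_eq, han]
  have hainvfix : ∀ x : Fin (n + 1), x.val < 3 → α⁻¹ x = x := by
    intro x hx
    rw [Equiv.Perm.inv_eq_iff_eq, hα₃ x hx]
  -- the basic words
  set h := α⁻¹ * β with hh_def
  set g := α * β with hg_def
  -- β is an involution
  have hβinv : β⁻¹ = β := by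
    rw [inv_eq_iff_mul_eq_one]
    ext x
    rcases eq_or_ne x ((4 : ℕ) : Fin (n + 1)) with e | h4
    · rw [e]; simp only [Equiv.Perm.mul_apply, hb4, hb6]; rfl
    rcases eq_or_ne x ((6 : ℕ) : Fin (n + 1)) with e | h6
    · rw [e]; simp only [Equiv.Perm.mul_apply, hb6, hb4]; rfl
    · have hfix : β x = x := by
        have hx : x = ((x.val : ℕ) : Fin (n + 1)) := (Fin.cast_val_eq_self x).symm
        rw [hx]
        apply hbfix x.val (by omega)
        · intro e; apply h4; rw [hx]; rw [e]
        · intro e; apply h6; rw [hx]; rw [e]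
      simp only [Equiv.Perm.mul_apply, hfix]; rfl
  -- pointwise values of h
  have hh3 : h ((3 : ℕ) : Fin (n + 1)) = ((n : ℕ) : Fin (n + 1)) := by
    rw [hh_def, Equiv.Perm.mul_apply, hbfix 3 (by omega) (by omega) (by omega), hainv3]
  have hh6 : h ((6 : ℕ) : Fin (n + 1)) = ((3 : ℕ) : Fin (n + 1)) := by
    rw [hh_def, Equiv.Perm.mul_apply, hb6, hainv 4 (by omega) (by omega)]
  have hh4 : h ((4 : ℕ) : Fin (n + 1)) = ((5 : ℕ) : Fin (n + 1)) := by
    rw [hh_def, Equiv.Perm.mul_apply, hb4, hainv 6 (by omega) (by omega)]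
  have hh5 : h ((5 : ℕ) : Fin (n + 1)) = ((4 : ℕ) : Fin (n + 1)) := by
    rw [hh_def, Equiv.Perm.mul_apply, hbfix 5 (by omega) (by omega) (by omega),
      hainv 5 (by omega) (by omega)]
  have hhstep : ∀ i : ℕ, 7 ≤ i → i ≤ n → h ((i : ℕ) : Fin (n + 1)) = ((i - 1 : ℕ) : Fin (n + 1)) := by
    intro i h7 hi
    rw [hh_def, Equiv.Perm.mul_apply, hbfix i hi (by omega) (by omega), hainv i (by omega) hi]
  have hhfix : ∀ x : Fin (n + 1), x.val < 3 → h x = x := by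
    intro x hx
    have hx' : x = ((x.val : ℕ) : Fin (n + 1)) := (Fin.cast_val_eq_self x).symm
    rw [hh_def, Equiv.Perm.mul_apply]
    rw [hx', hbfix x.val (by omega) (by omega) (by omega), ← hx', hainvfix x hx]
  -- pointwise values of g
  have hg3 : g ((3 : ℕ) : Fin (n + 1)) = ((4 : ℕ) : Fin (n + 1)) := by
    rw [hg_def, Equiv.Perm.mul_apply, hbfix 3 (by omega) (by omega) (by omega)]
    exact hα₁ 3 (by omega) (by omega)
  have hg4 : g ((4 : ℕ) : Fin (n + 1)) = ((7 : ℕ) : Fin (n + 1)) := by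
    rw [hg_def, Equiv.Perm.mul_apply, hb4]
    exact hα₁ 6 (by omega) (by omega)
  have hg5 : g ((5 : ℕ) : Fin (n + 1)) = ((6 : ℕ) : Fin (n + 1)) := by
    rw [hg_def, Equiv.Perm.mul_apply, hbfix 5 (by omega) (by omega) (by omega)]
    exact hα₁ 5 (by omega) (by omega)
  have hg6 : g ((6 : ℕ) : Fin (n + 1)) = ((5 : ℕ) : Fin (n + 1)) := by
    rw [hg_def, Equiv.Perm.mul_apply, hb6]
    exact hα₁ 4 (by omega) (by omega)
  have hgn : g ((n : ℕ) : Fin (n + 1)) = ((3 : ℕ) : Fin (n + 1)) := by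
    rw [hg_def, Equiv.Perm.mul_apply, hbfix n (by omega) (by omega) (by omega), han]
  have hgstep : ∀ i : ℕ, 7 ≤ i → i < n → g ((i : ℕ) : Fin (n + 1)) = ((i + 1 : ℕ) : Fin (n + 1)) := by
    intro i h7 hi
    rw [hg_def, Equiv.Perm.mul_apply, hbfix i (by omega) (by omega) (by omega)]
    exact hα₁ i (by omega) hi
  have hgfix : ∀ x : Fin (n + 1), x.val < 3 → g x = x := by
    intro x hx
    have hx' : x = ((x.val : ℕ) : Fin (n + 1)) := (Fin.cast_val_eq_self x).symm
    rw [hg_def, Equiv.Perm.mul_apply]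
    rw [hx', hbfix x.val (by omega) (by omega) (by omega), ← hx', hα₃ x hx]
  -- helper for x ≠ cast j
  have hneval : ∀ (x : Fin (n + 1)) (j : ℕ), j ≤ n → x.val ≠ j → x ≠ ((j : ℕ) : Fin (n + 1)) := by
    intro x j hj hv e
    exact hv (by rw [e, hval j hj])
  -- C = h^2 pointwise
  have hCapp : ∀ x : Fin (n + 1), (h ^ 2) x = h (h x) := by
    intro x; rw [sq]; rfl
  have hC3 : (h ^ 2) ((3 : ℕ) : Fin (n + 1)) = ((n - 1 : ℕ) : Fin (n + 1)) := by
    rw [hCapp, hh3, hhstep n (by omega) (by omega)]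
  have hC6 : (h ^ 2) ((6 : ℕ) : Fin (n + 1)) = ((n : ℕ) : Fin (n + 1)) := by
    rw [hCapp, hh6, hh3]
  have hC7 : (h ^ 2) ((7 : ℕ) : Fin (n + 1)) = ((3 : ℕ) : Fin (n + 1)) := by
    rw [hCapp, hhstep 7 (by omega) (by omega),
      show ((7 - 1 : ℕ) : Fin (n + 1)) = ((6 : ℕ) : Fin (n + 1)) by norm_num, hh6]
  have hCstep : ∀ i : ℕ, 8 ≤ i → i ≤ n →
      (h ^ 2) ((i : ℕ) : Fin (n + 1)) = ((i - 2 : ℕ) : Fin (n + 1)) := by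
    intro i h8 hi
    rw [hCapp, hhstep i (by omega) hi, hhstep (i - 1) (by omega) (by omega),
      show (i - 1 - 1 : ℕ) = (i - 2 : ℕ) by omega]
  have hC4 : (h ^ 2) ((4 : ℕ) : Fin (n + 1)) = ((4 : ℕ) : Fin (n + 1)) := by
    rw [hCapp, hh4, hh5]
  have hC5 : (h ^ 2) ((5 : ℕ) : Fin (n + 1)) = ((5 : ℕ) : Fin (n + 1)) := by
    rw [hCapp, hh5, hh4]
  have hCfix : ∀ x : Fin (n + 1), x.val < 3 → (h ^ 2) x = x := by
    intro x hx
    rw [hCapp, hhfix x hx, hhfix x hx]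
  -- τ = (4 6 n)
  have hτ : h * h * (g * g) = f3 ((4 : ℕ) : Fin (n + 1)) ((6 : ℕ) : Fin (n + 1)) ((n : ℕ) : Fin (n + 1)) := by
    ext x
    have hvn : x.val ≤ n := by omega
    simp only [Equiv.Perm.mul_apply]
    obtain ⟨v, hv⟩ : ∃ v, x.val = v := ⟨x.val, rfl⟩
    have hx : x = ((v : ℕ) : Fin (n + 1)) := by rw [← hv, Fin.cast_val_eq_self]
    have hcase : v < 3 ∨ v = 3 ∨ v = 4 ∨ v = 5 ∨ v = 6 ∨ (7 ≤ v ∧ v ≤ n - 2) ∨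
        (7 ≤ v ∧ v = n - 1) ∨ (7 ≤ v ∧ v = n) := by omega
    rcases hcase with e | e | e | e | e | ⟨e1, e2⟩ | ⟨e1, e2⟩ | ⟨e1, e2⟩
    · have e' : x.val < 3 := by omega
      rw [hgfix x e', hgfix x e', hhfix x e', hhfix x e',
        f3_other (hneval x 4 (by omega) (by omega)) (hneval x 6 (by omega) (by omega))
          (hneval x n (by omega) (by omega))]
    · rw [e] at hx
      rw [hx, hg3, hg4, hhstep 7 (by omega) (by omega),
        show ((7 - 1 : ℕ) : Fin (n + 1)) = ((6 : ℕ) : Fin (n + 1)) by norm_num, hh6,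
        f3_other (hne 3 4 (by omega) (by omega) (by omega)) (hne 3 6 (by omega) (by omega) (by omega))
          (hne 3 n (by omega) (by omega) (by omega))]
    · rw [e] at hx
      rw [hx, hg4]
      rcases eq_or_ne n 7 with e7 | e7
      · rw [show ((7 : ℕ) : Fin (n + 1)) = ((n : ℕ) : Fin (n + 1)) by rw [e7], hgn, hh3,
          hhstep n (by omega) (by omega),
          f3_a (hne 4 6 (by omega) (by omega) (by omega)) (hne 6 n (by omega) (by omega) (by omega)),
          show (n - 1 : ℕ) = 6 by omega]
      · rw [hgstep 7 (by omega) (by omega), show (7 + 1 : ℕ) = 8 by norm_num,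
          hhstep 8 (by omega) (by omega), show ((8 - 1 : ℕ) : Fin (n + 1)) = ((7 : ℕ) : Fin (n + 1)) by norm_num,
          hhstep 7 (by omega) (by omega), show (7 - 1 : ℕ) = 6 by norm_num,
          f3_a (hne 4 6 (by omega) (by omega) (by omega)) (hne 6 n (by omega) (by omega) (by omega))]
    · rw [e] at hx
      rw [hx, hg5, hg6, hh5, hh4,
        f3_other (hne 5 4 (by omega) (by omega) (by omega)) (hne 5 6 (by omega) (by omega) (by omega))
          (hne 5 n (by omega) (by omega) (by omega))]
    · rw [e] at hx
      rw [hx, hg6, hg5, hh6, hh3, f3_b]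
    · rw [hx, hgstep v e1 (by omega), hgstep (v + 1) (by omega) (by omega),
        hhstep (v + 2) (by omega) (by omega), show (v + 2 - 1 : ℕ) = v + 1 by omega,
        hhstep (v + 1) (by omega) (by omega), show (v + 1 - 1 : ℕ) = v by omega,
        f3_other (hne v 4 (by omega) (by omega) (by omega)) (hne v 6 (by omega) (by omega) (by omega))
          (hne v n (by omega) (by omega) (by omega))]
    · rw [e2] at hx
      rw [hx, hgstep (n - 1) (by omega) (by omega), show (n - 1 + 1 : ℕ) = n by omega, hgn, hh3,
        hhstep n (by omega) (by omega),
        f3_other (hne (n - 1) 4 (by omega) (by omega) (by omega))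
          (hne (n - 1) 6 (by omega) (by omega) (by omega))
          (hne (n - 1) n (by omega) (by omega) (by omega))]
    · rw [e2] at hx
      rw [hx, hgn, hg3, hh4, hh5,
        f3_c (hne 4 n (by omega) (by omega) (by omega)) (hne 6 n (by omega) (by omega) (by omega))]
  -- values of q = β⁻¹ * α
  have hq4 : (β⁻¹ * α) ((4 : ℕ) : Fin (n + 1)) = ((5 : ℕ) : Fin (n + 1)) := by
    rw [hβinv, Equiv.Perm.mul_apply, hα₁ 4 (by omega) (by omega), show (4 + 1 : ℕ) = 5 by norm_num,
      hbfix 5 (by omega) (by omega) (by omega)]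
  have hq6 : (β⁻¹ * α) ((6 : ℕ) : Fin (n + 1)) = ((7 : ℕ) : Fin (n + 1)) := by
    rw [hβinv, Equiv.Perm.mul_apply, hα₁ 6 (by omega) (by omega), show (6 + 1 : ℕ) = 7 by norm_num,
      hbfix 7 (by omega) (by omega) (by omega)]
  have hqn : (β⁻¹ * α) ((n : ℕ) : Fin (n + 1)) = ((3 : ℕ) : Fin (n + 1)) := by
    rw [hβinv, Equiv.Perm.mul_apply, han, hbfix 3 (by omega) (by omega) (by omega)]
  -- rewrite the word generators as explicit cycles
  have hτw : α⁻¹ * β * α⁻¹ * β⁻¹ * α * β⁻¹ * α * β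
      = f3 ((4 : ℕ) : Fin (n + 1)) ((6 : ℕ) : Fin (n + 1)) ((n : ℕ) : Fin (n + 1)) := by
    rw [← hτ, hh_def, hg_def, hβinv]
    simp only [mul_assoc]
  have hg3rd : (β⁻¹ * α) * (α⁻¹ * β * α⁻¹ * β⁻¹ * α * β⁻¹ * α * β) * (β⁻¹ * α)⁻¹
      = f3 ((5 : ℕ) : Fin (n + 1)) ((7 : ℕ) : Fin (n + 1)) ((3 : ℕ) : Fin (n + 1)) := by
    rw [hτw, f3_conj, hq4, hq6, hqn]
  have hSrw : ({(α⁻¹ * β) ^ 2,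
        α⁻¹ * β * α⁻¹ * β⁻¹ * α * β⁻¹ * α * β,
        (β⁻¹ * α) * (α⁻¹ * β * α⁻¹ * β⁻¹ * α * β⁻¹ * α * β) * (β⁻¹ * α)⁻¹} :
        Set (Equiv.Perm (Fin (n + 1))))
      = {h ^ 2, f3 ((4 : ℕ) : Fin (n + 1)) ((6 : ℕ) : Fin (n + 1)) ((n : ℕ) : Fin (n + 1)),
         f3 ((5 : ℕ) : Fin (n + 1)) ((7 : ℕ) : Fin (n + 1)) ((3 : ℕ) : Fin (n + 1))} := by
    rw [hg3rd, hτw, hh_def]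
  rw [hSrw]
  -- common distinctness helpers
  have hM4 : ∀ x : Fin (n + 1), (x.val = 3 ∨ 6 ≤ x.val) → x ≠ ((4 : ℕ) : Fin (n + 1)) :=
    fun x hMx => hneval x 4 (by omega) (by rcases hMx with e | e <;> omega)
  have hM5 : ∀ x : Fin (n + 1), (x.val = 3 ∨ 6 ≤ x.val) → x ≠ ((5 : ℕ) : Fin (n + 1)) :=
    fun x hMx => hneval x 5 (by omega) (by rcases hMx with e | e <;> omega)
  constructor
  · -- forward direction: the closure is contained in the even, 0-1-2-fixing perms
    intro hσ
    let K : Subgroup (Equiv.Perm (Fin (n + 1))) :=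
      { carrier := {τ | Equiv.Perm.sign τ = 1 ∧ ∀ x : Fin (n + 1), x.val < 3 → τ x = x}
        mul_mem' := by
          rintro a b ⟨ha1, ha2⟩ ⟨hb1, hb2⟩
          refine ⟨by rw [map_mul, ha1, hb1, one_mul], fun x hx => ?_⟩
          rw [Equiv.Perm.mul_apply, hb2 x hx, ha2 x hx]
        one_mem' := ⟨map_one _, fun x hx => rfl⟩
        inv_mem' := by
          rintro a ⟨ha1, ha2⟩
          refine ⟨by rw [map_inv, ha1, inv_one], fun x hx => ?_⟩
          nth_rewrite 1 [← ha2 x hx]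
          rw [Equiv.Perm.inv_eq_iff_eq] }
    have hsub : ({h ^ 2, f3 ((4 : ℕ) : Fin (n + 1)) ((6 : ℕ) : Fin (n + 1)) ((n : ℕ) : Fin (n + 1)),
         f3 ((5 : ℕ) : Fin (n + 1)) ((7 : ℕ) : Fin (n + 1)) ((3 : ℕ) : Fin (n + 1))} :
         Set (Equiv.Perm (Fin (n + 1)))) ⊆ K := by
      intro t ht
      simp only [Set.mem_insert_iff, Set.mem_singleton_iff] at ht
      rcases ht with rfl | rfl | rfl
      · refine ⟨by rw [map_pow]; exact Int.units_sq _, hCfix⟩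
      · refine ⟨?_, fun x hx => f3_other (hneval x 4 (by omega) (by omega))
          (hneval x 6 (by omega) (by omega)) (hneval x n (by omega) (by omega))⟩
        rw [f3, map_mul, Equiv.Perm.sign_swap (hne 4 n (by omega) (by omega) (by omega)),
          Equiv.Perm.sign_swap (hne 4 6 (by omega) (by omega) (by omega))]
        norm_num
      · refine ⟨?_, fun x hx => f3_other (hneval x 5 (by omega) (by omega))
          (hneval x 7 (by omega) (by omega)) (hneval x 3 (by omega) (by omega))⟩
        rw [f3, map_mul, Equiv.Perm.sign_swap (hne 5 3 (by omega) (by omega) (by omega)),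
          Equiv.Perm.sign_swap (hne 5 7 (by omega) (by omega) (by omega))]
        norm_num
    exact (Subgroup.closure_le K).2 hsub hσ
  · -- backward direction: generation
    rintro ⟨hsign, hfix⟩
    -- memberships of the three generators
    have hCH : h ^ 2 ∈ Subgroup.closure
        ({h ^ 2, f3 ((4 : ℕ) : Fin (n + 1)) ((6 : ℕ) : Fin (n + 1)) ((n : ℕ) : Fin (n + 1)),
          f3 ((5 : ℕ) : Fin (n + 1)) ((7 : ℕ) : Fin (n + 1)) ((3 : ℕ) : Fin (n + 1))} :
          Set (Equiv.Perm (Fin (n + 1)))) :=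
      Subgroup.subset_closure (Set.mem_insert _ _)
    have hτH : f3 ((4 : ℕ) : Fin (n + 1)) ((6 : ℕ) : Fin (n + 1)) ((n : ℕ) : Fin (n + 1)) ∈
        Subgroup.closure
        ({h ^ 2, f3 ((4 : ℕ) : Fin (n + 1)) ((6 : ℕ) : Fin (n + 1)) ((n : ℕ) : Fin (n + 1)),
          f3 ((5 : ℕ) : Fin (n + 1)) ((7 : ℕ) : Fin (n + 1)) ((3 : ℕ) : Fin (n + 1))} :
          Set (Equiv.Perm (Fin (n + 1)))) :=
      Subgroup.subset_closure (Set.mem_insert_iff.mpr (Or.inr (Set.mem_insert _ _)))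
    have ht2H : f3 ((5 : ℕ) : Fin (n + 1)) ((7 : ℕ) : Fin (n + 1)) ((3 : ℕ) : Fin (n + 1)) ∈
        Subgroup.closure
        ({h ^ 2, f3 ((4 : ℕ) : Fin (n + 1)) ((6 : ℕ) : Fin (n + 1)) ((n : ℕ) : Fin (n + 1)),
          f3 ((5 : ℕ) : Fin (n + 1)) ((7 : ℕ) : Fin (n + 1)) ((3 : ℕ) : Fin (n + 1))} :
          Set (Equiv.Perm (Fin (n + 1)))) :=
      Subgroup.subset_closure (Set.mem_insert_iff.mpr (Or.inr (Set.mem_insert_iff.mpr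
        (Or.inr rfl))))
    set HH := Subgroup.closure
        ({h ^ 2, f3 ((4 : ℕ) : Fin (n + 1)) ((6 : ℕ) : Fin (n + 1)) ((n : ℕ) : Fin (n + 1)),
          f3 ((5 : ℕ) : Fin (n + 1)) ((7 : ℕ) : Fin (n + 1)) ((3 : ℕ) : Fin (n + 1))} :
          Set (Equiv.Perm (Fin (n + 1)))) with hHH_def
    -- C^k fixes 4
    have hC4k : ∀ k : ℕ, ((h ^ 2) ^ k) ((4 : ℕ) : Fin (n + 1)) = ((4 : ℕ) : Fin (n + 1)) := by
      intro k
      induction k with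
      | zero => rfl
      | succ k ih => rw [pow_succ (h ^ 2) k, Equiv.Perm.mul_apply, hC4, ih]
    -- orbit of 6 under h
    have horb : ∀ j : ℕ, 2 ≤ j → j ≤ n - 5 →
        (h ^ j) ((6 : ℕ) : Fin (n + 1)) = ((n + 2 - j : ℕ) : Fin (n + 1)) := by
      intro j hj2
      induction j, hj2 using Nat.le_induction with
      | base =>
        intro _
        rw [show (h ^ 2) = h ^ (2 : ℕ) from rfl, hC6, show (n + 2 - 2 : ℕ) = n by omega]
      | succ j hj ih =>
        intro hj1
        rw [pow_succ' h j, Equiv.Perm.mul_apply, ih (by omega),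
          hhstep (n + 2 - j) (by omega) (by omega), show (n + 2 - j - 1 : ℕ) = n + 2 - (j + 1) by omega]
    have hper : (h ^ (n - 4)) ((6 : ℕ) : Fin (n + 1)) = ((6 : ℕ) : Fin (n + 1)) := by
      rw [show (n - 4) = (n - 5) + 1 by omega, pow_succ' h (n - 5), Equiv.Perm.mul_apply,
        horb (n - 5) (by omega) (le_refl _), show (n + 2 - (n - 5) : ℕ) = 7 by omega,
        hhstep 7 (by omega) (by omega), show (7 - 1 : ℕ) = 6 by norm_num]
    have hperiod : ∀ t : ℕ, (h ^ (t * (n - 4))) ((6 : ℕ) : Fin (n + 1)) = ((6 : ℕ) : Fin (n + 1)) := by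
      intro t
      induction t with
      | zero => rw [Nat.zero_mul, pow_zero]; rfl
      | succ t ih =>
        rw [show (t + 1) * (n - 4) = t * (n - 4) + (n - 4) by ring, pow_add h (t * (n - 4)) (n - 4),
          Equiv.Perm.mul_apply, hper, ih]
    -- the orbit of 6 under C = h^2 covers M
    have hcover : ∀ x : Fin (n + 1), (x.val = 3 ∨ 6 ≤ x.val) →
        ∃ k : ℕ, ((h ^ 2) ^ k) ((6 : ℕ) : Fin (n + 1)) = x := by
      intro x hMx
      obtain ⟨l, hl⟩ := hodd
      have hvn : x.val ≤ n := by omega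
      have hx : x = ((x.val : ℕ) : Fin (n + 1)) := (Fin.cast_val_eq_self x).symm
      have hcase : x.val = 3 ∨ x.val = 6 ∨ (7 ≤ x.val ∧ x.val ≤ n) := by
        rcases hMx with e | e <;> omega
      rcases hcase with e | e | ⟨e1, e2⟩
      · refine ⟨l - 1, ?_⟩
        rw [← pow_mul h 2 (l - 1), show 2 * (l - 1) = 1 + (n - 4) by omega, pow_add h 1 (n - 4),
          Equiv.Perm.mul_apply, hper, pow_one, hh6, hx, e]
      · refine ⟨0, ?_⟩
        rw [pow_zero, hx, e]
        rfl
      · rcases Nat.even_or_odd (n + 2 - x.val) with ⟨m, hm⟩ | ⟨m, hm⟩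
        · refine ⟨m, ?_⟩
          rw [← pow_mul h 2 m, show 2 * m = n + 2 - x.val by omega,
            horb (n + 2 - x.val) (by omega) (by omega),
            show (n + 2 - (n + 2 - x.val) : ℕ) = x.val by omega]
          exact hx.symm
        · refine ⟨m + l - 1, ?_⟩
          rw [← pow_mul h 2 (m + l - 1), show 2 * (m + l - 1) = (n + 2 - x.val) + (n - 4) by omega,
            pow_add h (n + 2 - x.val) (n - 4), Equiv.Perm.mul_apply, hper, horb (n + 2 - x.val) (by omega) (by omega),
            show (n + 2 - (n + 2 - x.val) : ℕ) = x.val by omega]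
          exact hx.symm
    -- C maps M to M without fixed points
    have hMC : ∀ x : Fin (n + 1), (x.val = 3 ∨ 6 ≤ x.val) →
        (((h ^ 2) x).val = 3 ∨ 6 ≤ ((h ^ 2) x).val) ∧ (h ^ 2) x ≠ x := by
      intro x hMx
      have hvn : x.val ≤ n := by omega
      have hx : x = ((x.val : ℕ) : Fin (n + 1)) := (Fin.cast_val_eq_self x).symm
      have hcase : x.val = 3 ∨ x.val = 6 ∨ x.val = 7 ∨ (8 ≤ x.val ∧ x.val ≤ n) := by
        rcases hMx with e | e <;> omega
      rcases hcase with e | e | e | ⟨e1, e2⟩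
      · rw [hx, e, hC3]
        refine ⟨by rw [hval (n - 1) (by omega)]; omega, hne (n - 1) 3 (by omega) (by omega) (by omega)⟩
      · rw [hx, e, hC6]
        refine ⟨by rw [hval n (by omega)]; omega, hne n 6 (by omega) (by omega) (by omega)⟩
      · rw [hx, e, hC7]
        refine ⟨by rw [hval 3 (by omega)]; omega, hne 3 7 (by omega) (by omega) (by omega)⟩
      · rw [hx, hCstep x.val (by omega) (by omega)]
        refine ⟨by rw [hval (x.val - 2) (by omega)]; omega,
          hne (x.val - 2) x.val (by omega) (by omega) (by omega)⟩
    -- all iterates of 6 under C lie in M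
    have hMa : ∀ k : ℕ, ((((h ^ 2) ^ k) ((6 : ℕ) : Fin (n + 1))).val = 3 ∨
        6 ≤ (((h ^ 2) ^ k) ((6 : ℕ) : Fin (n + 1))).val) := by
      intro k
      induction k with
      | zero =>
        rw [pow_zero]
        right
        rw [show ((1 : Equiv.Perm (Fin (n+1))) ((6 : ℕ) : Fin (n + 1))) = ((6 : ℕ) : Fin (n + 1)) from rfl,
          hval 6 (by omega)]
      | succ k ih =>
        rw [pow_succ' (h ^ 2) k, Equiv.Perm.mul_apply]
        exact (hMC _ ih).1
    -- the consecutive three-cycles family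
    have hstepfam : ∀ k : ℕ,
        f3 ((4 : ℕ) : Fin (n + 1)) (((h ^ 2) ^ k) ((6 : ℕ) : Fin (n + 1)))
          (((h ^ 2) ^ (k + 1)) ((6 : ℕ) : Fin (n + 1))) ∈ HH := by
      intro k
      have e1 : ((h ^ 2) ^ k) ((n : ℕ) : Fin (n + 1))
          = ((h ^ 2) ^ (k + 1)) ((6 : ℕ) : Fin (n + 1)) := by
        rw [pow_succ (h ^ 2) k, Equiv.Perm.mul_apply, hC6]
      have e2 : f3 ((4 : ℕ) : Fin (n + 1)) (((h ^ 2) ^ k) ((6 : ℕ) : Fin (n + 1)))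
          (((h ^ 2) ^ (k + 1)) ((6 : ℕ) : Fin (n + 1)))
          = ((h ^ 2) ^ k) * f3 ((4 : ℕ) : Fin (n + 1)) ((6 : ℕ) : Fin (n + 1)) ((n : ℕ) : Fin (n + 1))
            * (((h ^ 2) ^ k))⁻¹ := by
        rw [f3_conj, hC4k k, e1]
      rw [e2]
      exact mul_mem (mul_mem (Subgroup.pow_mem _ hCH k) hτH) (inv_mem (Subgroup.pow_mem _ hCH k))
    -- f3 4 6 (C^k 6) is in the closure
    have hP1 : ∀ k : ℕ, ((h ^ 2) ^ k) ((6 : ℕ) : Fin (n + 1)) ≠ ((6 : ℕ) : Fin (n + 1)) →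
        f3 ((4 : ℕ) : Fin (n + 1)) ((6 : ℕ) : Fin (n + 1))
          (((h ^ 2) ^ k) ((6 : ℕ) : Fin (n + 1))) ∈ HH := by
      intro k
      induction k with
      | zero => intro hk; exact absurd rfl (by rw [pow_zero] at hk; exact hk)
      | succ k ih =>
        intro hk
        have euv : ((h ^ 2) ^ (k + 1)) ((6 : ℕ) : Fin (n + 1))
            = (h ^ 2) (((h ^ 2) ^ k) ((6 : ℕ) : Fin (n + 1))) := by
          rw [pow_succ' (h ^ 2) k, Equiv.Perm.mul_apply]
        rcases eq_or_ne (((h ^ 2) ^ k) ((6 : ℕ) : Fin (n + 1))) ((6 : ℕ) : Fin (n + 1)) with e | e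
        · have := hstepfam k
          rw [e] at this
          exact this
        · have hMu := hMa k
          have hMv := hMa (k + 1)
          have huv : ((h ^ 2) ^ k) ((6 : ℕ) : Fin (n + 1))
              ≠ ((h ^ 2) ^ (k + 1)) ((6 : ℕ) : Fin (n + 1)) := by
            rw [euv]
            exact ((hMC _ hMu).2).symm
          rw [f3_mul (hne 4 6 (by omega) (by omega) (by omega)) (hM4 _ hMu).symm (hM4 _ hMv).symm
            e.symm hk.symm huv]
          exact mul_mem (hstepfam k) (ih e)
    -- all pairs from M
    have hpair : ∀ x y : Fin (n + 1), (x.val = 3 ∨ 6 ≤ x.val) → (y.val = 3 ∨ 6 ≤ y.val) →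
        x ≠ y → f3 ((4 : ℕ) : Fin (n + 1)) x y ∈ HH := by
      intro x y hMx hMy hxy
      obtain ⟨k, hk⟩ := hcover x hMx
      obtain ⟨m, hm⟩ := hcover y hMy
      set d := m + (k + 1) * (n - 4) - k with hd_def
      have hkd : k + d = m + (k + 1) * (n - 4) := by
        have h1 : k + 1 ≤ (k + 1) * (n - 4) := Nat.le_mul_of_pos_right (k + 1) (by omega)
        omega
      have hCt : ((h ^ 2) ^ ((k + 1) * (n - 4))) ((6 : ℕ) : Fin (n + 1)) = ((6 : ℕ) : Fin (n + 1)) := by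
        rw [← pow_mul h 2 ((k + 1) * (n - 4)), show 2 * ((k + 1) * (n - 4)) = (2 * (k + 1)) * (n - 4) by ring]
        exact hperiod (2 * (k + 1))
      have hy' : ((h ^ 2) ^ (k + d)) ((6 : ℕ) : Fin (n + 1)) = y := by
        rw [hkd, pow_add (h ^ 2) m ((k + 1) * (n - 4)), Equiv.Perm.mul_apply, hCt, hm]
      have hzy : ((h ^ 2) ^ k) (((h ^ 2) ^ d) ((6 : ℕ) : Fin (n + 1))) = y := by
        rw [← Equiv.Perm.mul_apply, ← pow_add (h ^ 2) k d]
        exact hy'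
      have hz6 : ((h ^ 2) ^ d) ((6 : ℕ) : Fin (n + 1)) ≠ ((6 : ℕ) : Fin (n + 1)) := by
        intro e
        exact hxy (by rw [← hk, ← hzy, e])
      have e3 : f3 ((4 : ℕ) : Fin (n + 1)) x y
          = ((h ^ 2) ^ k) * f3 ((4 : ℕ) : Fin (n + 1)) ((6 : ℕ) : Fin (n + 1))
              (((h ^ 2) ^ d) ((6 : ℕ) : Fin (n + 1))) * (((h ^ 2) ^ k))⁻¹ := by
        rw [f3_conj, hC4k k, hk, hzy]
      rw [e3]
      exact mul_mem (mul_mem (Subgroup.pow_mem _ hCH k) (hP1 d hz6))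
        (inv_mem (Subgroup.pow_mem _ hCH k))
    -- all 3-cycles inside M
    have htripM : ∀ x y z : Fin (n + 1), (x.val = 3 ∨ 6 ≤ x.val) → (y.val = 3 ∨ 6 ≤ y.val) →
        (z.val = 3 ∨ 6 ≤ z.val) → x ≠ y → y ≠ z → z ≠ x → f3 x y z ∈ HH := by
      intro x y z hMx hMy hMz hxy hyz hzx
      rw [f3_mul₂ (hM4 x hMx).symm (hM4 z hMz).symm (hM4 y hMy).symm hzx.symm hxy hyz.symm]
      exact mul_mem (hpair z x hMz hMx hzx) (hpair x y hMx hMy hxy)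
    -- membership facts for small constants
    have hM3c : (((3 : ℕ) : Fin (n + 1)).val = 3 ∨ 6 ≤ ((3 : ℕ) : Fin (n + 1)).val) := by
      rw [hval 3 (by omega)]; omega
    have hM6c : (((6 : ℕ) : Fin (n + 1)).val = 3 ∨ 6 ≤ ((6 : ℕ) : Fin (n + 1)).val) := by
      rw [hval 6 (by omega)]; omega
    have hM7c : (((7 : ℕ) : Fin (n + 1)).val = 3 ∨ 6 ≤ ((7 : ℕ) : Fin (n + 1)).val) := by
      rw [hval 7 (by omega)]; omega
    -- (4 5 3) is in the closure
    have h453 : f3 ((4 : ℕ) : Fin (n + 1)) ((5 : ℕ) : Fin (n + 1)) ((3 : ℕ) : Fin (n + 1)) ∈ HH := by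
      have hu : f3 ((4 : ℕ) : Fin (n + 1)) ((7 : ℕ) : Fin (n + 1)) ((3 : ℕ) : Fin (n + 1)) ∈ HH :=
        hpair _ _ hM7c hM3c (hne 7 3 (by omega) (by omega) (by omega))
      have key := mul_mem (mul_mem hu ht2H) (inv_mem hu)
      rw [f3_conj,
        f3_other (hne 5 4 (by omega) (by omega) (by omega)) (hne 5 7 (by omega) (by omega) (by omega))
          (hne 5 3 (by omega) (by omega) (by omega)),
        f3_b,
        f3_c (hne 4 3 (by omega) (by omega) (by omega)) (hne 7 3 (by omega) (by omega) (by omega))]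
        at key
      have e2 : f3 ((5 : ℕ) : Fin (n + 1)) ((3 : ℕ) : Fin (n + 1)) ((4 : ℕ) : Fin (n + 1))
          = f3 ((4 : ℕ) : Fin (n + 1)) ((5 : ℕ) : Fin (n + 1)) ((3 : ℕ) : Fin (n + 1)) :=
        (f3_rotate (hne 5 3 (by omega) (by omega) (by omega)) (hne 3 4 (by omega) (by omega) (by omega))
          (hne 4 5 (by omega) (by omega) (by omega))).trans
        (f3_rotate (hne 3 4 (by omega) (by omega) (by omega)) (hne 4 5 (by omega) (by omega) (by omega))
          (hne 5 3 (by omega) (by omega) (by omega)))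
      rw [e2] at key
      exact key
    -- (4 5 x) for all x in M
    have h45x : ∀ x : Fin (n + 1), (x.val = 3 ∨ 6 ≤ x.val) →
        f3 ((4 : ℕ) : Fin (n + 1)) ((5 : ℕ) : Fin (n + 1)) x ∈ HH := by
      intro x hMx
      rcases hMx with e | e
      · rw [show x = ((3 : ℕ) : Fin (n + 1)) by rw [← e, Fin.cast_val_eq_self]]
        exact h453
      · have hx3 : x ≠ ((3 : ℕ) : Fin (n + 1)) := hneval x 3 (by omega) (by omega)
        obtain ⟨z, hMz, hz3, hzx⟩ : ∃ z : Fin (n + 1), (z.val = 3 ∨ 6 ≤ z.val) ∧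
            z ≠ ((3 : ℕ) : Fin (n + 1)) ∧ z ≠ x := by
          by_cases hx6 : x = ((6 : ℕ) : Fin (n + 1))
          · exact ⟨((7 : ℕ) : Fin (n + 1)), hM7c, hne 7 3 (by omega) (by omega) (by omega),
              by rw [hx6]; exact hne 7 6 (by omega) (by omega) (by omega)⟩
          · exact ⟨((6 : ℕ) : Fin (n + 1)), hM6c, hne 6 3 (by omega) (by omega) (by omega),
              fun e' => hx6 e'.symm⟩
        have hv : f3 ((3 : ℕ) : Fin (n + 1)) x z ∈ HH :=
          htripM _ _ _ hM3c (Or.inr e) hMz hx3.symm hzx.symm hz3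
        have key := mul_mem (mul_mem hv h453) (inv_mem hv)
        rw [f3_conj,
          f3_other (hne 4 3 (by omega) (by omega) (by omega)) (hM4 x (Or.inr e)).symm
            (hM4 z hMz).symm,
          f3_other (hne 5 3 (by omega) (by omega) (by omega)) (hM5 x (Or.inr e)).symm
            (hM5 z hMz).symm,
          f3_a hx3.symm hzx.symm] at key
        exact key
    -- all pairs for pivot 4 within {3,...,n} minus {4}
    have hp4 : ∀ x y : Fin (n + 1), 3 ≤ x.val → 3 ≤ y.val → x ≠ y →
        x ≠ ((4 : ℕ) : Fin (n + 1)) → y ≠ ((4 : ℕ) : Fin (n + 1)) →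
        f3 ((4 : ℕ) : Fin (n + 1)) x y ∈ HH := by
      intro x y hx3 hy3 hxy hx4 hy4
      have hMval : ∀ w : Fin (n + 1), 3 ≤ w.val → w ≠ ((4 : ℕ) : Fin (n + 1)) →
          w ≠ ((5 : ℕ) : Fin (n + 1)) → (w.val = 3 ∨ 6 ≤ w.val) := by
        intro w h3 h4 h5
        have e4 : w.val ≠ 4 := fun e => h4 (by rw [← Fin.cast_val_eq_self w, e])
        have e5 : w.val ≠ 5 := fun e => h5 (by rw [← Fin.cast_val_eq_self w, e])
        omega
      by_cases hx5 : x = ((5 : ℕ) : Fin (n + 1))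
      · rw [hx5]
        exact h45x y (hMval y hy3 hy4 (fun e => hxy (hx5.trans e.symm)))
      by_cases hy5 : y = ((5 : ℕ) : Fin (n + 1))
      · rw [hy5, ← f3_inv]
        exact inv_mem (h45x x (hMval x hx3 hx4 hx5))
      · exact hpair x y (hMval x hx3 hx4 hx5) (hMval y hy3 hy4 hy5) hxy
    -- all 3-cycles supported in {3, ..., n}
    have htri : ∀ x y z : Fin (n + 1), 3 ≤ x.val → 3 ≤ y.val → 3 ≤ z.val →
        x ≠ y → y ≠ z → z ≠ x → f3 x y z ∈ HH := by
      intro x y z hx3 hy3 hz3 hxy hyz hzx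
      by_cases hx4 : x = ((4 : ℕ) : Fin (n + 1))
      · rw [hx4]
        rw [hx4] at hxy hzx
        exact hp4 y z hy3 hz3 hyz hxy.symm hzx
      by_cases hy4 : y = ((4 : ℕ) : Fin (n + 1))
      · rw [hy4] at hxy hyz ⊢
        rw [f3_rotate hxy hyz hzx]
        exact hp4 z x hz3 hx3 hzx hyz.symm hxy
      by_cases hz4 : z = ((4 : ℕ) : Fin (n + 1))
      · rw [hz4] at hyz hzx ⊢
        rw [f3_rotate hxy hyz hzx, f3_rotate hyz hzx hxy]
        exact hp4 x y hx3 hy3 hxy hzx.symm hyz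
      · rw [f3_mul₂ (fun e => hx4 e.symm) (fun e => hz4 e.symm) (fun e => hy4 e.symm)
          hzx.symm hxy hyz.symm]
        exact mul_mem (hp4 z x hz3 hx3 hzx hz4 hx4) (hp4 x y hx3 hy3 hxy hx4 hy4)
    -- transfer: σ is a product of 3-cycles supported in {3,...,n}
    have h₂ : ∀ x : Fin (n + 1), σ x ≠ x → 3 ≤ x.val := by
      intro x hx
      by_contra hc
      exact hx (hfix x (by omega))
    have h₁ : ∀ x : Fin (n + 1), 3 ≤ x.val ↔ 3 ≤ (σ x).val := by
      intro x
      constructor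
      · intro hpx
        by_contra hns
        have e1 : σ (σ x) = σ x := hfix (σ x) (by omega)
        have e2 : σ x = x := σ.injective e1
        rw [e2] at hns
        omega
      · intro hpσ
        by_contra hnp
        rw [hfix x (by omega)] at hpσ
        omega
    have hsign' : Equiv.Perm.sign (σ.subtypePerm (p := fun x : Fin (n + 1) => 3 ≤ x.val) (fun x => (h₁ x).symm)) = 1 := by
      rw [Equiv.Perm.sign_subtypePerm σ (p := fun x : Fin (n + 1) => 3 ≤ x.val) (fun x => (h₁ x).symm) h₂]
      exact hsign
    have hσ'mem : σ.subtypePerm (p := fun x : Fin (n + 1) => 3 ≤ x.val) (fun x => (h₁ x).symm) ∈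
        Subgroup.closure {t : Equiv.Perm {x : Fin (n + 1) // 3 ≤ x.val} | t.IsThreeCycle} := by
      rw [Equiv.Perm.closure_three_cycles_eq_alternating]
      exact Equiv.Perm.mem_alternatingGroup.mpr hsign'
    have hmap : σ ∈ Subgroup.map (Equiv.Perm.ofSubtype)
        (Subgroup.closure {t : Equiv.Perm {x : Fin (n + 1) // 3 ≤ x.val} | t.IsThreeCycle}) :=
      ⟨σ.subtypePerm (p := fun x : Fin (n + 1) => 3 ≤ x.val) (fun x => (h₁ x).symm), hσ'mem, Equiv.Perm.ofSubtype_subtypePerm (p := fun x : Fin (n + 1) => 3 ≤ x.val) (fun x => (h₁ x).symm) h₂⟩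
    rw [MonoidHom.map_closure] at hmap
    refine (Subgroup.closure_le HH).mpr ?_ hmap
    rintro t ⟨t₀, ht₀, rfl⟩
    obtain ⟨a, b, c, hab, hbc, hca, -, -, -, rfl⟩ := isThreeCycle_destruct ht₀
    have hof : Equiv.Perm.ofSubtype (f3 a b c) = f3 (a : Fin (n + 1)) (b : Fin (n + 1)) (c : Fin (n + 1)) := by
      simp only [f3, map_mul, Equiv.Perm.ofSubtype_swap_eq]
    rw [hof]
    exact htri (a : Fin (n + 1)) b c a.2 b.2 c.2 (Subtype.coe_ne_coe.mpr hab)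
      (Subtype.coe_ne_coe.mpr hbc) (Subtype.coe_ne_coe.mpr hca)
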